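/- Let G₁,…,G_K be complex matrices with G_k of size P×N_k, let N = ∑_{k=1}^{K} N_k, define Σ₁ = I_P, Σ_{k+1} = Σ_k + G_k G_kᴴ, and J_k = I_{N_k} + G_kᴴ Σ_k⁻¹ G_k, with R_k the upper-triangular Cholesky factor of J_k and 𝒾 = log₂ det(I_P + ∑_{k=1}^{K} G_k G_kᴴ). Then equality (1/N) ∑_{k=1}^{K} ∑_{j=1}^{N_k} ([R_k]_{jj})⁻² = 2^{-𝒾/N} holds if and only if, for every k, all diagonal entries of R_k are equal and det(J_k) = 2^{(N_k/N)·𝒾}. -/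

import Mathlib

open Matrix BigOperators
open scoped ComplexOrder

private theorem amgm_sum_eq_iff {ι : Type*} [Fintype ι] (x : ι → ℝ) (g : ℝ)
    (hx : ∀ i, 0 < x i) (hg : 0 < g)
    (hprod : ∏ i, x i = g ^ (Fintype.card ι)) :
    (∑ i, x i) = (Fintype.card ι) * g ↔ ∀ i, x i = g := by
  constructor
  · intro hsum i
    have hexp : ∀ j, x j / g = Real.exp (Real.log (x j / g)) := fun j =>
      (Real.exp_log (div_pos (hx j) hg)).symm
    have hsumlog : ∑ j, Real.log (x j / g) = 0 := by
      rw [← Real.log_prod (s := Finset.univ) (f := fun j => x j / g) fun j _ => (div_pos (hx j) hg).ne']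
      rw [Finset.prod_div_distrib, hprod, Finset.prod_const, Finset.card_univ,
        div_self (pow_ne_zero _ hg.ne'), Real.log_one]
    have hsumexp : ∑ j, Real.exp (Real.log (x j / g)) = (Fintype.card ι : ℝ) := by
      have hsumdiv : ∑ j, x j / g = (Fintype.card ι : ℝ) := by
        rw [← Finset.sum_div, hsum, mul_div_assoc, div_self hg.ne', mul_one]
      rw [← hsumdiv]
      exact Finset.sum_congr rfl fun j _ => (hexp j).symm
    have key : ∑ j, (Real.exp (Real.log (x j / g)) - (Real.log (x j / g) + 1)) = 0 := by
      rw [Finset.sum_sub_distrib, Finset.sum_add_distrib, hsumexp, hsumlog,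
        Finset.sum_const, Finset.card_univ]
      simp
    have hnn : ∀ j ∈ Finset.univ, 0 ≤ Real.exp (Real.log (x j / g)) - (Real.log (x j / g) + 1) :=
      fun j _ => by linarith [Real.add_one_le_exp (Real.log (x j / g))]
    have hz := (Finset.sum_eq_zero_iff_of_nonneg hnn).mp key i (Finset.mem_univ i)
    have hlog : Real.log (x i / g) = 0 := by
      by_contra hne
      have := Real.add_one_lt_exp hne
      linarith
    have h1 : x i / g = 1 := by rw [hexp i, hlog, Real.exp_zero]
    rwa [div_eq_one_iff_eq hg.ne'] at h1
  · intro h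
    simp [h, Finset.sum_const, Finset.card_univ, nsmul_eq_mul]

/-- In the successive-cancellation model (`Σ 0 = I_P`,
`Σ (k+1) = Σ k + G k (G k)ᴴ`, `J k = I + (G k)ᴴ (Σ k)⁻¹ (G k)`), with `R k` the
upper-triangular Cholesky factor of `J k` and `𝒾 = log₂ det (I_P + ∑ k, G k (G k)ᴴ)`,
the average-MSE lower bound `2 ^ (-𝒾/N)` is attained, i.e.
`(1/N) ∑ k ∑ j, ([R k] j j)⁻² = 2 ^ (-𝒾/N)`, if and only if for every `k` all diagonal
entries of `R k` are equal and `det (J k) = 2 ^ ((N k / N) * 𝒾)`. -/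
theorem avg_mse_eq_iff_uniform_information {P K : ℕ} (N : Fin K → ℕ)
    (G : ∀ k : Fin K, Matrix (Fin P) (Fin (N k)) ℂ)
    (Sig : Fin (K + 1) → Matrix (Fin P) (Fin P) ℂ)
    (hSig0 : Sig 0 = 1)
    (hSigS : ∀ k : Fin K, Sig k.succ = Sig k.castSucc + G k * (G k)ᴴ)
    (J : ∀ k : Fin K, Matrix (Fin (N k)) (Fin (N k)) ℂ)
    (hJ : ∀ k : Fin K, J k = 1 + (G k)ᴴ * (Sig k.castSucc)⁻¹ * G k)
    (R : ∀ k : Fin K, Matrix (Fin (N k)) (Fin (N k)) ℂ)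
    (hfact : ∀ k, J k = (R k)ᴴ * R k)
    (hTri : ∀ k, (R k).BlockTriangular id)
    (hdiag : ∀ k, ∀ j, ((R k) j j).im = 0 ∧ 0 < ((R k) j j).re)
    (Ntot : ℕ) (hNtot : Ntot = ∑ k, N k) (hNpos : 0 < Ntot)
    (Info : ℝ)
    (hInfo : Info = Real.logb 2 ((1 + ∑ k, G k * (G k)ᴴ).det).re) :
    (1 / Ntot) * (∑ k, ∑ j, (((R k) j j).re) ^ (-2 : ℤ)) = (2 : ℝ) ^ (-(Info / Ntot)) ↔
      ∀ k, (∀ i j, (R k) i i = (R k) j j) ∧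
        (J k).det = (((2 : ℝ) ^ (((N k : ℝ) / Ntot) * Info) : ℝ) : ℂ) := by
  have hNne : (Ntot : ℝ) ≠ 0 := Nat.cast_ne_zero.mpr hNpos.ne'
  -- diagonal entries are real
  have hre : ∀ k j, (R k) j j = (((R k) j j).re : ℂ) := by
    intro k j
    exact Complex.ext (by simp) (by simp [(hdiag k j).1])
  -- determinant of R
  have detR : ∀ k, (R k).det = ((∏ j, ((R k) j j).re : ℝ) : ℂ) := by
    intro k
    rw [Matrix.det_of_upperTriangular (hTri k)]
    push_cast
    exact Finset.prod_congr rfl fun j _ => by simpa using hre k j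
  -- determinant of J
  have detJ : ∀ k, (J k).det = ((∏ j, ((R k) j j).re ^ 2 : ℝ) : ℂ) := by
    intro k
    rw [hfact k, Matrix.det_mul, Matrix.det_conjTranspose, detR k, Complex.star_def,
      Complex.conj_ofReal, ← Complex.ofReal_mul, ← Finset.prod_mul_distrib]
    norm_num [sq]
  -- positive-definiteness of the Sig matrices
  have hPD : ∀ k : Fin (K + 1), (Sig k).PosDef := by
    intro k
    induction k using Fin.induction with
    | zero => rw [hSig0]; exact Matrix.PosDef.one
    | succ k ih =>
      rw [hSigS k]
      exact ih.add_posSemidef (Matrix.posSemidef_self_mul_conjTranspose _)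
  -- determinant recursion
  have detStep : ∀ k : Fin K, (Sig k.succ).det = (Sig k.castSucc).det * (J k).det := by
    intro k
    have hU : IsUnit (Sig k.castSucc).det := (hPD k.castSucc).det_pos.ne'.isUnit
    have hfac : Sig k.castSucc + G k * (G k)ᴴ
        = Sig k.castSucc * (1 + (Sig k.castSucc)⁻¹ * (G k * (G k)ᴴ)) := by
      rw [mul_add, mul_one, ← Matrix.mul_assoc, Matrix.mul_nonsing_inv _ hU, Matrix.one_mul]
    rw [hSigS k, hJ k, hfac, Matrix.det_mul]
    congr 1
    have h1 : (1 : Matrix (Fin (N k)) (Fin (N k)) ℂ) + (G k)ᴴ * (Sig k.castSucc)⁻¹ * G k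
        = 1 + (G k)ᴴ * ((Sig k.castSucc)⁻¹ * G k) := by rw [Matrix.mul_assoc]
    have h2 : (1 : Matrix (Fin P) (Fin P) ℂ) + (Sig k.castSucc)⁻¹ * (G k * (G k)ᴴ)
        = 1 + (Sig k.castSucc)⁻¹ * G k * (G k)ᴴ := by rw [Matrix.mul_assoc]
    rw [h1, h2, Matrix.det_one_add_mul_comm]
  -- closed forms by induction
  have key : ∀ n (h : n ≤ K),
      Sig ⟨n, Nat.lt_succ_of_le h⟩
          = 1 + ∑ ℓ ∈ Finset.univ.filter (fun ℓ : Fin K => (ℓ : ℕ) < n), G ℓ * (G ℓ)ᴴ ∧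
      (Sig ⟨n, Nat.lt_succ_of_le h⟩).det
          = ∏ ℓ ∈ Finset.univ.filter (fun ℓ : Fin K => (ℓ : ℕ) < n), (J ℓ).det := by
    intro n
    induction n with
    | zero =>
      intro h
      have h0 : (⟨0, Nat.lt_succ_of_le h⟩ : Fin (K + 1)) = 0 := rfl
      constructor
      · rw [h0, hSig0]; simp
      · rw [h0, hSig0]; simp
    | succ n ih =>
      intro h
      have hn : n < K := h
      have hfilter : Finset.univ.filter (fun ℓ : Fin K => (ℓ : ℕ) < n + 1)
          = insert ⟨n, hn⟩ (Finset.univ.filter (fun ℓ : Fin K => (ℓ : ℕ) < n)) := by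
        ext ℓ
        simp only [Finset.mem_filter, Finset.mem_univ, true_and, Finset.mem_insert,
          Fin.ext_iff]
        omega
      have hnot : (⟨n, hn⟩ : Fin K) ∉ Finset.univ.filter (fun ℓ : Fin K => (ℓ : ℕ) < n) := by
        simp
      have hsucc : (⟨n + 1, Nat.lt_succ_of_le h⟩ : Fin (K + 1)) = (⟨n, hn⟩ : Fin K).succ := rfl
      have hcast : (⟨n, Nat.lt_succ_of_le hn.le⟩ : Fin (K + 1)) = (⟨n, hn⟩ : Fin K).castSucc :=
        rfl
      obtain ⟨ih1, ih2⟩ := ih hn.le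
      constructor
      · rw [hsucc, hSigS, hfilter, Finset.sum_insert hnot, ← hcast, ih1]
        abel
      · rw [hsucc, detStep, hfilter, Finset.prod_insert hnot, ← hcast, ih2]
        ring
  have hfK : Finset.univ.filter (fun ℓ : Fin K => (ℓ : ℕ) < K) = Finset.univ := by
    ext ℓ; simp [ℓ.isLt]
  obtain ⟨hSigK1, hSigK2⟩ := key K le_rfl
  rw [hfK] at hSigK1 hSigK2
  set X : ℝ := ∏ k, ∏ j, ((R k) j j).re ^ 2 with hXdef
  have hdet : (1 + ∑ k, G k * (G k)ᴴ).det = (X : ℂ) := by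
    rw [← hSigK1, hSigK2, hXdef]
    push_cast
    exact Finset.prod_congr rfl fun k _ => by simpa using detJ k
  have hXpos : 0 < X :=
    Finset.prod_pos fun k _ => Finset.prod_pos fun j _ => pow_pos (hdiag k j).2 2
  have hInfoX : (2 : ℝ) ^ Info = X := by
    rw [hInfo, hdet, Complex.ofReal_re]
    exact Real.rpow_logb two_pos (by norm_num) hXpos
  set g : ℝ := (2 : ℝ) ^ (-(Info / Ntot)) with hgdef
  have hgpos : 0 < g := Real.rpow_pos_of_pos two_pos _
  have hginv : g⁻¹ = (2 : ℝ) ^ (Info / (Ntot : ℝ)) := by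
    rw [hgdef, ← Real.rpow_neg_one, ← Real.rpow_mul (by norm_num)]
    congr 1
    ring
  -- the family indexed by the sigma type
  set x : (Σ k : Fin K, Fin (N k)) → ℝ := fun p => (((R p.1) p.2 p.2).re) ^ (-2 : ℤ) with hxdef
  have hxval : ∀ p : Σ k : Fin K, Fin (N k),
      x p = ((((R p.1) p.2 p.2).re) ^ 2)⁻¹ := by
    intro p
    rw [hxdef]
    norm_num [_root_.zpow_neg, zpow_two, sq]
  have hxpos : ∀ p, 0 < x p := fun p => by
    rw [hxval]; exact inv_pos.mpr (pow_pos (hdiag p.1 p.2).2 2)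
  have hcard : Fintype.card (Σ k : Fin K, Fin (N k)) = Ntot := by
    rw [hNtot]; simp [Fintype.card_sigma]
  have hprod : ∏ p, x p = g ^ (Fintype.card (Σ k : Fin K, Fin (N k))) := by
    rw [hcard]
    have h1 : ∏ p : Σ k : Fin K, Fin (N k), x p = X⁻¹ := by
      rw [← Finset.univ_sigma_univ, Finset.prod_sigma, hXdef, ← Finset.prod_inv_distrib]
      refine Finset.prod_congr rfl fun k _ => ?_
      rw [← Finset.prod_inv_distrib]
      exact Finset.prod_congr rfl fun j _ => hxval ⟨k, j⟩
    rw [h1, ← hInfoX, hgdef, ← Real.rpow_natCast ((2 : ℝ) ^ (-(Info / Ntot))) Ntot,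
      ← Real.rpow_mul (by norm_num), ← Real.rpow_neg_one ((2 : ℝ) ^ Info),
      ← Real.rpow_mul (by norm_num)]
    congr 1
    field_simp
  have hsum : (∑ k, ∑ j, (((R k) j j).re) ^ (-2 : ℤ)) = ∑ p, x p := by
    rw [hxdef, ← Finset.univ_sigma_univ, Finset.sum_sigma]
  have hiff1 : (1 / (Ntot : ℝ)) * (∑ k, ∑ j, (((R k) j j).re) ^ (-2 : ℤ)) = g
      ↔ (∑ p, x p) = (Fintype.card (Σ k : Fin K, Fin (N k)) : ℝ) * g := by
    rw [hsum, hcard, one_div, inv_mul_eq_div, div_eq_iff hNne, mul_comm g]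
  rw [hiff1, amgm_sum_eq_iff x g hxpos hgpos hprod]
  -- now relate pointwise equality to the stated condition
  constructor
  · intro hall k
    have hsq : ∀ j : Fin (N k), (((R k) j j).re) ^ 2 = (2 : ℝ) ^ (Info / (Ntot : ℝ)) := by
      intro j
      have h := hall ⟨k, j⟩
      rw [hxval ⟨k, j⟩] at h
      have h2 : ((((R k) j j).re) ^ 2) = g⁻¹ := by
        rw [← h, inv_inv]
      rw [h2, hginv]
    constructor
    · intro i j
      have hij : (((R k) i i).re) = (((R k) j j).re) :=
        (pow_left_inj₀ (hdiag k i).2.le (hdiag k j).2.le two_ne_zero).mp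
          ((hsq i).trans (hsq j).symm)
      rw [hre k i, hre k j, hij]
    · rw [detJ k]
      congr 1
      calc ∏ j, ((R k) j j).re ^ 2 = ∏ _j : Fin (N k), (2 : ℝ) ^ (Info / (Ntot : ℝ)) :=
            Finset.prod_congr rfl fun j _ => hsq j
        _ = ((2 : ℝ) ^ (Info / (Ntot : ℝ))) ^ (N k) := by
            rw [Finset.prod_const, Finset.card_univ, Fintype.card_fin]
        _ = (2 : ℝ) ^ (((N k : ℝ) / Ntot) * Info) := by
            rw [← Real.rpow_natCast ((2 : ℝ) ^ (Info / (Ntot : ℝ))) (N k),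
              ← Real.rpow_mul (by norm_num)]
            congr 1
            ring
  · intro hall p
    obtain ⟨k, j⟩ := p
    obtain ⟨heq, hdetk⟩ := hall k
    have hNk : N k ≠ 0 := fun h0 => (Fin.elim0 (h0 ▸ j))
    have hsqprod : ∏ i, ((R k) i i).re ^ 2 = ((2 : ℝ) ^ (Info / (Ntot : ℝ))) ^ (N k) := by
      have h := (detJ k).symm.trans hdetk
      have hXeq : (∏ i, ((R k) i i).re ^ 2) = (2 : ℝ) ^ (((N k : ℝ) / Ntot) * Info) :=
        Complex.ofReal_inj.mp h
      rw [hXeq, ← Real.rpow_natCast ((2 : ℝ) ^ (Info / (Ntot : ℝ))) (N k),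
        ← Real.rpow_mul (by norm_num)]
      congr 1
      ring
    have hconst : ∏ i, ((R k) i i).re ^ 2 = (((R k) j j).re ^ 2) ^ (N k) := by
      calc ∏ i, ((R k) i i).re ^ 2 = ∏ _i : Fin (N k), ((R k) j j).re ^ 2 :=
            Finset.prod_congr rfl fun i _ => by rw [heq i j]
        _ = (((R k) j j).re ^ 2) ^ (N k) := by
            rw [Finset.prod_const, Finset.card_univ, Fintype.card_fin]
    have hsq : ((R k) j j).re ^ 2 = (2 : ℝ) ^ (Info / (Ntot : ℝ)) := by
      refine (pow_left_inj₀ (sq_nonneg _) (Real.rpow_pos_of_pos two_pos _).le hNk).mp ?_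
      rw [← hconst, hsqprod]
    rw [hxval ⟨k, j⟩]
    show (((R k) j j).re ^ 2)⁻¹ = g
    rw [hsq, ← hginv, inv_inv]
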